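/- Let r ≥ 3 and let G be a (K_r ⊟ rP_1, 2P_2)-free graph. Then for every X ⊆ V(G), cutmim_G(X, V(G)∖X) < max{6, r}. In particular, mimw(G) < max{6, r}. -/

import Mathlib

open SimpleGraph

/-- `M` is an induced matching in the bipartite graph `G[X,Y]`: every pair in `M` is an
edge of `G` with first endpoint in `X` and second endpoint in `Y`, the pairs are pairwise
vertex-disjoint, and no edge of `G` between `X` and `Y` joins vertices incident to
distinct pairs of `M`. -/
def IsInducedCutMatching {V : Type*} (G : SimpleGraph V) (X Y : Set V)
    (M : Finset (V × V)) : Prop :=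
  (∀ p ∈ M, p.1 ∈ X ∧ p.2 ∈ Y ∧ G.Adj p.1 p.2) ∧
  ∀ p ∈ M, ∀ q ∈ M, p ≠ q →
    p.1 ≠ q.1 ∧ p.2 ≠ q.2 ∧ p.1 ≠ q.2 ∧ p.2 ≠ q.1 ∧
    ¬ G.Adj p.1 q.2 ∧ ¬ G.Adj q.1 p.2

/-- `cutmim G X Y` is the maximum size of an induced matching in `G[X,Y]`. -/
noncomputable def cutmim {V : Type*} (G : SimpleGraph V) (X Y : Set V) : ℕ :=
  sSup {n : ℕ | ∃ M : Finset (V × V), IsInducedCutMatching G X Y M ∧ M.card = n}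

/-- A branch decomposition of a graph `G`: a finite tree `T` of maximum degree at most 3
together with a bijection `δ` from the vertices of `G` to the leaves of `T`. -/
structure BranchDecomp {V : Type*} (G : SimpleGraph V) where
  L : Type
  T : SimpleGraph L
  finite : Finite L
  connected : T.Connected
  acyclic : T.IsAcyclic
  subcubic : ∀ x : L, (T.neighborSet x).ncard ≤ 3
  δ : V → L
  δ_inj : Function.Injective δ
  δ_leaf : ∀ v : V, (T.neighborSet (δ v)).ncard = 1
  δ_surj : ∀ x : L, (T.neighborSet x).ncard = 1 → ∃ v : V, δ v = x

/-- The side of the cut of `V(G)` induced by the tree edge `ab`: the set of vertices of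
`G` mapped by `δ` into the component of `T - ab` containing `a`. -/
def BranchDecomp.side {V : Type*} {G : SimpleGraph V} (B : BranchDecomp G)
    (a b : B.L) : Set V :=
  {v : V | (B.T.deleteEdges {s(a, b)}).Reachable (B.δ v) a}

/-- The mim-width of a branch decomposition: the maximum over tree edges `ab` of
`cutmim G (A_e, V(G) \ A_e)`. -/
noncomputable def BranchDecomp.width {V : Type*} {G : SimpleGraph V}
    (B : BranchDecomp G) : ℕ :=
  sSup {n : ℕ | ∃ a b : B.L, B.T.Adj a b ∧ n = cutmim G (B.side a b) (B.side a b)ᶜ}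

/-- The mim-width of a graph: the minimum width over all branch decompositions
(by convention `0` if no branch decomposition exists, e.g. for graphs with fewer
than two vertices). -/
noncomputable def mimw {V : Type*} (G : SimpleGraph V) : ℕ :=
  sInf {n : ℕ | ∃ B : BranchDecomp G, B.width = n}

/-- `G` is `H`-free: no induced subgraph of `G` is isomorphic to `H`. -/
def HFree {V W : Type*} (G : SimpleGraph V) (H : SimpleGraph W) : Prop :=
  ¬ ∃ S : Set V, Nonempty ((G.induce S) ≃g H)

/-- The disjoint union of two graphs. -/
def sumGraph {α β : Type*} (G : SimpleGraph α) (H : SimpleGraph β) :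
    SimpleGraph (α ⊕ β) :=
  SimpleGraph.fromRel (fun a b =>
    (∃ x y, a = Sum.inl x ∧ b = Sum.inl y ∧ G.Adj x y) ∨
    (∃ x y, a = Sum.inr x ∧ b = Sum.inr y ∧ H.Adj x y))

/-- `tP₂`: the disjoint union of `t` single edges. -/
def tP2graph (t : ℕ) : SimpleGraph (Fin t × Fin 2) :=
  SimpleGraph.fromRel (fun a b => a.1 = b.1)

/-- `sP₁ + P₂`: `s` isolated vertices together with a single edge. -/
def sP1P2graph (s : ℕ) : SimpleGraph (Fin s ⊕ Fin 2) :=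
  SimpleGraph.fromRel (fun a b => ∃ i j : Fin 2, a = Sum.inr i ∧ b = Sum.inr j)

/-- `K_r ⊟ K_r`: two disjoint copies of `K_r` joined by a perfect matching. -/
def KboxK (r : ℕ) : SimpleGraph (Fin r ⊕ Fin r) :=
  SimpleGraph.fromRel (fun a b =>
    (∃ i j, a = Sum.inl i ∧ b = Sum.inl j) ∨
    (∃ i j, a = Sum.inr i ∧ b = Sum.inr j) ∨
    (∃ i, a = Sum.inl i ∧ b = Sum.inr i))

/-- `K_r ⊟ rP₁`: a clique `a_1, …, a_r`, an independent set `b_1, …, b_r`, and the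
matching edges `a_i b_i`. -/
def KboxI (r : ℕ) : SimpleGraph (Fin r ⊕ Fin r) :=
  SimpleGraph.fromRel (fun a b =>
    (∃ i j, a = Sum.inl i ∧ b = Sum.inl j) ∨
    (∃ i, a = Sum.inl i ∧ b = Sum.inr i))

/-- `K_r ⊟ P₁`: `K_r` plus a pendant vertex attached to exactly one vertex of `K_r`. -/
def KboxP1 (r : ℕ) : SimpleGraph (Fin r ⊕ Unit) :=
  SimpleGraph.fromRel (fun a b =>
    (∃ i j : Fin r, a = Sum.inl i ∧ b = Sum.inl j) ∨
    (∃ i : Fin r, i.val = 0 ∧ a = Sum.inl i ∧ b = Sum.inr ()))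

/-- The claw `K_{1,3}`: vertex `0` adjacent to the three leaves `1`, `2`, `3`. -/
def clawGraph : SimpleGraph (Fin 4) :=
  SimpleGraph.fromRel (fun a _ => a = 0)

/-- The diamond: `K_4` minus the edge `{2,3}`. -/
def diamondGraph : SimpleGraph (Fin 4) :=
  SimpleGraph.fromRel (fun a b => ¬(a = 2 ∧ b = 3) ∧ ¬(a = 3 ∧ b = 2))

/-- The bowtie `⋈`: two triangles `{0,1,2}` and `{0,3,4}` sharing the vertex `0`. -/
def bowtieGraph : SimpleGraph (Fin 5) :=
  SimpleGraph.fromRel (fun a b => a = 0 ∨ (a = 1 ∧ b = 2) ∨ (a = 3 ∧ b = 4))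

/-- `P₁ + 2P₂`: the isolated vertex `0` and the two disjoint edges `12` and `34`. -/
def P1plus2P2graph : SimpleGraph (Fin 5) :=
  SimpleGraph.fromRel (fun a b => (a = 1 ∧ b = 2) ∨ (a = 3 ∧ b = 4))

/-- The subdivided claw `S_{1,1,5}`: centre `0` with leaves `1`, `2` at distance one and
the path `0-3-4-5-6-7`. -/
def S115graph : SimpleGraph (Fin 8) :=
  SimpleGraph.fromRel (fun a b =>
    (a = 0 ∧ b = 1) ∨ (a = 0 ∧ b = 2) ∨ (a = 0 ∧ b = 3) ∨
    (a = 3 ∧ b = 4) ∨ (a = 4 ∧ b = 5) ∨ (a = 5 ∧ b = 6) ∨ (a = 6 ∧ b = 7))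

/-- The Ramsey number `R(a,b)`: the least `N` such that every graph on at least `N`
vertices contains a clique of size `a` or an independent set of size `b`. -/
noncomputable def ramsey (a b : ℕ) : ℕ :=
  sInf {N : ℕ | ∀ M : ℕ, N ≤ M → ∀ G : SimpleGraph (Fin M),
    (∃ s : Finset (Fin M), G.IsNClique a s) ∨ (∃ s : Finset (Fin M), Gᶜ.IsNClique b s)}

/-- The `h × 2r` grid with the vertical edges prescribed by the wall construction:
the vertical edge between rows `i` and `i+1` of column `j` (all `0`-indexed) is kept
exactly when `i ≡ j (mod 2)`. -/
def wallPre (h r : ℕ) : SimpleGraph (Fin h × Fin (2 * r)) :=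
  SimpleGraph.fromRel (fun a b =>
    (a.1 = b.1 ∧ (a.2 : ℕ) + 1 = (b.2 : ℕ)) ∨
    (a.2 = b.2 ∧ (a.1 : ℕ) + 1 = (b.1 : ℕ) ∧ (a.1 : ℕ) % 2 = (a.2 : ℕ) % 2))

/-- The elementary `(h × r)`-wall: delete from `wallPre h r` all vertices of degree 1. -/
def elementaryWall (h r : ℕ) :
    SimpleGraph {v : Fin h × Fin (2 * r) // ((wallPre h r).neighborSet v).ncard ≠ 1} :=
  (wallPre h r).induce {v | ((wallPre h r).neighborSet v).ncard ≠ 1}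

/-- The graph obtained from `W` by simultaneously performing a clique implant on every
vertex of degree `3`: a degree-3 vertex `v` is replaced by the triangle of vertices
`(v, some u)` for `u` a neighbour of `v`, and `(v, some u)` inherits the edge of `v`
towards `u`; vertices of degree `≠ 3` are kept as `(v, none)`. -/
def cliqueImplantAll {V : Type*} (W : SimpleGraph V) :
    SimpleGraph {p : V × Option V //
      (p.2 = none ∧ (W.neighborSet p.1).ncard ≠ 3) ∨
      (∃ u, p.2 = some u ∧ (W.neighborSet p.1).ncard = 3 ∧ W.Adj p.1 u)} :=
  SimpleGraph.fromRel (fun a b =>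
    (a.1.1 = b.1.1 ∧ a.1.2 ≠ b.1.2) ∨
    (W.Adj a.1.1 b.1.1 ∧ (a.1.2 = none ∨ a.1.2 = some b.1.1) ∧
      (b.1.2 = none ∨ b.1.2 = some a.1.1)))

/-- A net-wall: the graph obtained from the elementary `(n × n)`-wall by performing a
clique implant on every vertex of degree `3`. -/
def netWall (n : ℕ) := cliqueImplantAll (elementaryWall n n)

/-- The chordal bipartite graph `G'` of Brault-Baron, Capelli and Mengel, built from a
graph `G`: vertices `x_v` (`Sum.inl v`), `y_v` (`Sum.inr (Sum.inl v)`), and for every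
ordered adjacent pair `p = (u,v)` two vertices `q_p = (p,0)` and `t_p = (p,1)`;
`X` is complete to `Y`, and for each adjacent pair `(u,v)` there is a path
`x_u - q_{(u,v)} - t_{(u,v)} - y_v`. -/
def BCMgraph {V : Type*} (G : SimpleGraph V) :
    SimpleGraph (V ⊕ V ⊕ ({p : V × V // G.Adj p.1 p.2} × Fin 2)) :=
  SimpleGraph.fromRel (fun a b =>
    (∃ u w : V, a = Sum.inl u ∧ b = Sum.inr (Sum.inl w)) ∨
    (∃ p : {p : V × V // G.Adj p.1 p.2},
      a = Sum.inl p.1.1 ∧ b = Sum.inr (Sum.inr (p, 0))) ∨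
    (∃ p : {p : V × V // G.Adj p.1 p.2},
      a = Sum.inr (Sum.inr (p, 0)) ∧ b = Sum.inr (Sum.inr (p, 1))) ∨
    (∃ p : {p : V × V // G.Adj p.1 p.2},
      a = Sum.inr (Sum.inr (p, 1)) ∧ b = Sum.inr (Sum.inl p.1.2)))


section Aux

open SimpleGraph

noncomputable def embedIsoAux {V W : Type*} (G : SimpleGraph V) (H : SimpleGraph W)
    (g : W → V) (hg : Function.Injective g)
    (hadj : ∀ a b, G.Adj (g a) (g b) ↔ H.Adj a b) :
    H ≃g (G.induce (Set.range g)) where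
  toEquiv := Equiv.ofInjective g hg
  map_rel_iff' := by
    intro a b
    simp only [Equiv.ofInjective_apply, comap_adj, Function.comp_apply]
    exact hadj a b

lemma not_hfree_aux {V W : Type*} (G : SimpleGraph V) (H : SimpleGraph W)
    (g : W → V) (hg : Function.Injective g)
    (hadj : ∀ a b, G.Adj (g a) (g b) ↔ H.Adj a b) :
    ¬ HFree G H :=
  fun h => h ⟨Set.range g, ⟨(embedIsoAux G H g hg hadj).symm⟩⟩

lemma no2P2_aux {V : Type*} (G : SimpleGraph V) (h2 : HFree G (tP2graph 2))
    {u1 v1 u2 v2 : V}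
    (d12 : u1 ≠ v1) (d13 : u1 ≠ u2) (d14 : u1 ≠ v2)
    (d23 : v1 ≠ u2) (d24 : v1 ≠ v2) (d34 : u2 ≠ v2)
    (e1 : G.Adj u1 v1) (e2 : G.Adj u2 v2)
    (n13 : ¬G.Adj u1 u2) (n14 : ¬G.Adj u1 v2)
    (n23 : ¬G.Adj v1 u2) (n24 : ¬G.Adj v1 v2) : False := by
  have n13' : ¬G.Adj u2 u1 := fun h => n13 h.symm
  have n14' : ¬G.Adj v2 u1 := fun h => n14 h.symm
  have n23' : ¬G.Adj u2 v1 := fun h => n23 h.symm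
  have n24' : ¬G.Adj v2 v1 := fun h => n24 h.symm
  refine not_hfree_aux G (tP2graph 2)
    (fun p => if p.1 = 0 then (if p.2 = 0 then u1 else v1)
              else (if p.2 = 0 then u2 else v2)) ?_ ?_ h2
  · intro p q h
    fin_cases p <;> fin_cases q <;> simp_all <;> decide
  · intro p q
    fin_cases p <;> fin_cases q <;>
      simp_all [tP2graph, SimpleGraph.fromRel_adj, e1.symm, e2.symm, d12, d34,
        G.irrefl, e1.ne', e2.ne'] <;> decide

lemma noKboxI_aux {V : Type*} (r : ℕ) (G : SimpleGraph V) (h1 : HFree G (KboxI r))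
    (a b : Fin r → V)
    (hab : ∀ i j, a i ≠ b j)
    (hm : ∀ i, G.Adj (a i) (b i))
    (hA : ∀ i j, i ≠ j → G.Adj (a i) (a j))
    (hB : ∀ i j, i ≠ j → ¬G.Adj (b i) (b j))
    (hc : ∀ i j, i ≠ j → ¬G.Adj (a i) (b j)) : False := by
  have hainj : ∀ i j, a i = a j → i = j := by
    intro i j h
    by_contra hij
    exact G.irrefl (h ▸ hA i j hij)
  have hbinj : ∀ i j, b i = b j → i = j := by
    intro i j h
    by_contra hij
    exact hc i j hij (h ▸ hm i)
  have adj_ll : ∀ i j : Fin r, (KboxI r).Adj (Sum.inl i) (Sum.inl j) ↔ i ≠ j := by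
    intro i j; simp [KboxI, SimpleGraph.fromRel_adj]
  have adj_lr : ∀ i j : Fin r, (KboxI r).Adj (Sum.inl i) (Sum.inr j) ↔ i = j := by
    intro i j; simp [KboxI, SimpleGraph.fromRel_adj, eq_comm]
  have adj_rl : ∀ i j : Fin r, (KboxI r).Adj (Sum.inr i) (Sum.inl j) ↔ i = j := by
    intro i j; simp [KboxI, SimpleGraph.fromRel_adj, eq_comm]
  have adj_rr : ∀ i j : Fin r, ¬ (KboxI r).Adj (Sum.inr i) (Sum.inr j) := by
    intro i j; simp [KboxI, SimpleGraph.fromRel_adj]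
  refine not_hfree_aux G (KboxI r) (Sum.elim a b) ?_ ?_ h1
  · rintro (i|i) (j|j) h <;> simp only [Sum.elim_inl, Sum.elim_inr] at h
    · exact congrArg Sum.inl (hainj i j h)
    · exact absurd h (hab i j)
    · exact absurd h.symm (hab j i)
    · exact congrArg Sum.inr (hbinj i j h)
  · rintro (i|i) (j|j) <;> simp only [Sum.elim_inl, Sum.elim_inr]
    · rw [adj_ll]
      constructor
      · intro h hij
        exact G.irrefl (hij ▸ h)
      · exact hA i j
    · rw [adj_lr]
      constructor
      · intro h
        by_contra hij
        exact hc i j hij h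
      · rintro rfl
        exact hm i
    · rw [adj_rl]
      constructor
      · intro h
        by_contra hij
        exact hc j i (fun e => hij e.symm) h.symm
      · rintro rfl
        exact (hm i).symm
    · rw [iff_false_intro (adj_rr i j), iff_false]
      intro h
      rcases Classical.em (i = j) with rfl | hij
      · exact G.irrefl h
      · exact hB i j hij h

lemma natSSup_lt_aux (s : Set ℕ) (m : ℕ) (hm : 0 < m)
    (h : ∀ n ∈ s, n < m) : sSup s < m := by
  rcases s.eq_empty_or_nonempty with rfl | hne
  · simpa [csSup_empty] using hm
  · have : sSup s ≤ m - 1 :=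
      csSup_le hne (fun n hn => Nat.le_sub_one_of_lt (h n hn))
    omega

lemma cut_matching_card_lt {V : Type*} (r : ℕ)
    (G : SimpleGraph V) (h1 : HFree G (KboxI r)) (h2 : HFree G (tP2graph 2))
    (X : Set V) (M : Finset (V × V)) (hM : IsInducedCutMatching G X Xᶜ M) :
    M.card < max 6 r := by
  by_contra hcon
  push_neg at hcon
  set m := max 6 r with hm
  have hm6 : 6 ≤ m := le_max_left 6 r
  have hmr : r ≤ m := le_max_right 6 r
  obtain ⟨M', hsub, hcard⟩ := Finset.exists_subset_card_eq (s := M) (n := m) hcon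
  have e := M'.equivFinOfCardEq hcard
  set f : Fin m → V × V := fun i => ((e.symm i : M') : V × V) with hf
  have hfM : ∀ i, f i ∈ M := fun i => hsub (e.symm i).2
  have hfinj : Function.Injective f := by
    intro i j h
    have := Subtype.ext (p := fun x => x ∈ M') h
    exact e.symm.injective this
  set a : Fin m → V := fun i => (f i).1 with ha
  set b : Fin m → V := fun i => (f i).2 with hb
  have haX : ∀ i, a i ∈ X := fun i => (hM.1 _ (hfM i)).1
  have hbX : ∀ i, b i ∈ Xᶜ := fun i => (hM.1 _ (hfM i)).2.1
  have hmedge : ∀ i, G.Adj (a i) (b i) := fun i => (hM.1 _ (hfM i)).2.2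
  have hab : ∀ i j, a i ≠ b j := by
    intro i j h
    exact hbX j (h ▸ haX i)
  have hpair : ∀ i j, i ≠ j →
      a i ≠ a j ∧ b i ≠ b j ∧ a i ≠ b j ∧ b i ≠ a j ∧
      ¬ G.Adj (a i) (b j) ∧ ¬ G.Adj (a j) (b i) :=
    fun i j hij => hM.2 _ (hfM i) _ (hfM j) (fun h => hij (hfinj h))
  -- every pair of indices carries an A-edge or a B-edge
  have hAB : ∀ i j, i ≠ j → G.Adj (a i) (a j) ∨ G.Adj (b i) (b j) := by
    intro i j hij
    by_contra hno
    push_neg at hno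
    obtain ⟨hs1, hs2, hs3, hs4, hs5, hs6⟩ := hpair i j hij
    exact no2P2_aux G h2 (hmedge i).ne hs1 hs3
      hs4 hs2 (hmedge j).ne
      (hmedge i) (hmedge j) hno.1 hs5 (fun h => hs6 h.symm) hno.2
  -- no A-edge is disjoint from a B-edge
  have h5 : ∀ i j k l : Fin m, i ≠ j → k ≠ l → i ≠ k → i ≠ l → j ≠ k → j ≠ l →
      G.Adj (a i) (a j) → G.Adj (b k) (b l) → False := by
    intro i j k l hij hkl hik hil hjk hjl hA hB
    exact no2P2_aux G h2 (hpair i j hij).1 (hab i k) (hab i l)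
      (hab j k) (hab j l) (hpair k l hkl).2.1
      hA hB (hpair i k hik).2.2.2.2.1 (hpair i l hil).2.2.2.2.1
      (hpair j k hjk).2.2.2.2.1 (hpair j l hjl).2.2.2.2.1
  set emb : Fin r → Fin m := Fin.castLE hmr with hemb
  have hembinj : ∀ i j : Fin r, i ≠ j → emb i ≠ emb j :=
    fun i j hij h => hij (Fin.castLE_injective hmr h)
  by_cases hexA : ∃ i j, i ≠ j ∧ G.Adj (a i) (a j)
  · obtain ⟨i, j, hij, hAij⟩ := hexA
    have noB : ∀ k l, k ≠ l → ¬ G.Adj (b k) (b l) := by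
      intro k l hkl hBkl
      -- find two indices distinct from i, j, k, l
      have hScard : ({i, j, k, l} : Finset (Fin m)).card ≤ 4 := by
        have t1 := Finset.card_insert_le i ({j, k, l} : Finset (Fin m))
        have t2 := Finset.card_insert_le j ({k, l} : Finset (Fin m))
        have t3 := Finset.card_insert_le k ({l} : Finset (Fin m))
        have t4 : ({l} : Finset (Fin m)).card = 1 := Finset.card_singleton l
        omega
      have hccard : 1 < ({i, j, k, l} : Finset (Fin m))ᶜ.card := by
        have := Finset.card_compl ({i, j, k, l} : Finset (Fin m))
        have hfm : Fintype.card (Fin m) = m := Fintype.card_fin m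
        omega
      obtain ⟨s, hs, t, ht, hst⟩ := Finset.one_lt_card.mp hccard
      simp only [Finset.mem_compl, Finset.mem_insert, Finset.mem_singleton,
        not_or] at hs ht
      obtain ⟨hsi, hsj, hsk, hsl⟩ := hs
      obtain ⟨hti, htj, htk, htl⟩ := ht
      have hAst : G.Adj (a s) (a t) := by
        rcases hAB s t hst with h | h
        · exact h
        · exact absurd h (fun h => h5 i j s t hij hst
            (fun e => hsi e.symm) (fun e => hti e.symm)
            (fun e => hsj e.symm) (fun e => htj e.symm) hAij h)
      exact h5 s t k l hst hkl hsk hsl htk htl hAst hBkl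
    have allA : ∀ p q, p ≠ q → G.Adj (a p) (a q) := by
      intro p q hpq
      rcases hAB p q hpq with h | h
      · exact h
      · exact absurd h (noB p q hpq)
    exact noKboxI_aux r G h1 (a ∘ emb) (b ∘ emb)
      (fun p q => hab _ _)
      (fun p => hmedge _)
      (fun p q hpq => allA _ _ (hembinj p q hpq))
      (fun p q hpq => noB _ _ (hembinj p q hpq))
      (fun p q hpq => (hpair _ _ (hembinj p q hpq)).2.2.2.2.1)
  · push_neg at hexA
    have allB : ∀ p q, p ≠ q → G.Adj (b p) (b q) := by
      intro p q hpq
      rcases hAB p q hpq with h | h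
      · exact absurd h (hexA p q hpq)
      · exact h
    exact noKboxI_aux r G h1 (b ∘ emb) (a ∘ emb)
      (fun p q h => hab (emb q) (emb p) h.symm)
      (fun p => (hmedge _).symm)
      (fun p q hpq => allB _ _ (hembinj p q hpq))
      (fun p q hpq => hexA _ _ (hembinj p q hpq))
      (fun p q hpq => fun h =>
        (hpair _ _ (hembinj q p (fun e => hpq e.symm))).2.2.2.2.1 h.symm)

end Aux

/-- Let `r ≥ 3` and let `G` be a `(K_r ⊟ rP₁, 2P₂)`-free graph.  Then
`cutmim_G(X, V(G) ∖ X) < max 6 r` for every `X ⊆ V(G)`; in particular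
`mimw(G) < max 6 r`. -/
theorem KboxI_2P2_free_mimw {V : Type*} [Finite V] (r : ℕ) (hr : 3 ≤ r)
    (G : SimpleGraph V) (h1 : HFree G (KboxI r)) (h2 : HFree G (tP2graph 2)) :
    (∀ X : Set V, cutmim G X Xᶜ < max 6 r) ∧ mimw G < max 6 r := by
  have hm0 : 0 < max 6 r := by omega
  have part1 : ∀ X : Set V, cutmim G X Xᶜ < max 6 r := by
    intro X
    apply natSSup_lt_aux _ _ hm0
    rintro n ⟨M, hM, rfl⟩
    exact cut_matching_card_lt r G h1 h2 X M hM
  refine ⟨part1, ?_⟩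
  rcases Set.eq_empty_or_nonempty {n : ℕ | ∃ B : BranchDecomp G, B.width = n}
    with hE | hne
  · unfold mimw
    rw [hE, Nat.sInf_empty]
    omega
  · have hmem := Nat.sInf_mem hne
    obtain ⟨B, hB⟩ := hmem
    unfold mimw
    rw [← hB] at *
    rw [hB]
    unfold BranchDecomp.width
    apply natSSup_lt_aux _ _ hm0
    rintro n ⟨x, y, hxy, rfl⟩
    exact part1 _
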